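/- Let Δ ⊆ ℝⁿ be a nonempty compact convex set with lower support function g_Δ(u) = min_{v ∈ Δ} ⟨v, u⟩, and let g : ℝⁿ → ℝ satisfy |g(u) − g_Δ(u)| ≤ C for all u ∈ ℝⁿ, for some constant C ≥ 0. Then the concave Legendre–Fenchel transform ǧ is finite at x if and only if x ∈ Δ; moreover |ǧ(x)| ≤ C for all x ∈ Δ, and ǧ restricted to Δ is a concave function. -/
import Mathlib


/-- Standard inner (dot) product on ℝⁿ. -/
noncomputable def dotp {n : ℕ} (x u : Fin n → ℝ) : ℝ := ∑ i, x i * u i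

/-- Concave Legendre–Fenchel transform ǧ(x) = inf_u (⟨x,u⟩ − g(u)), valued in [−∞,∞). -/
noncomputable def lfT {n : ℕ} (g : (Fin n → ℝ) → ℝ) (x : Fin n → ℝ) : EReal :=
  ⨅ u : Fin n → ℝ, ((dotp x u - g u : ℝ) : EReal)

/-- Lower support function of a set Δ: g_Δ(u) = inf_{v ∈ Δ} ⟨v,u⟩. -/
noncomputable def lsf {n : ℕ} (Δ : Set (Fin n → ℝ)) (u : Fin n → ℝ) : ℝ :=
  sInf ((fun v => dotp v u) '' Δ)

lemma dotp_cont {n : ℕ} (u : Fin n → ℝ) : Continuous (fun v : Fin n → ℝ => dotp v u) := by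
  unfold dotp
  exact continuous_finset_sum _ fun i _ => (continuous_apply i).mul continuous_const

lemma lsf_le {n : ℕ} {Δ : Set (Fin n → ℝ)} (hc : IsCompact Δ) {x : Fin n → ℝ}
    (hx : x ∈ Δ) (u : Fin n → ℝ) : lsf Δ u ≤ dotp x u :=
  csInf_le ((hc.image (dotp_cont u)).bddBelow) ⟨x, hx, rfl⟩

lemma dotp_smul {n : ℕ} (t : ℝ) (x u : Fin n → ℝ) : dotp x (t • u) = t * dotp x u := by
  unfold dotp
  rw [Finset.mul_sum]
  exact Finset.sum_congr rfl fun i _ => by simp [Pi.smul_apply]; ring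

lemma dotp_comb {n : ℕ} (a b : ℝ) (x y u : Fin n → ℝ) :
    dotp (a • x + b • y) u = a * dotp x u + b * dotp y u := by
  unfold dotp
  rw [Finset.mul_sum, Finset.mul_sum, ← Finset.sum_add_distrib]
  exact Finset.sum_congr rfl fun i _ => by simp [Pi.smul_apply]; ring

theorem stmt2 (n : ℕ) (Δ : Set (Fin n → ℝ))
    (hne : Δ.Nonempty) (hc : IsCompact Δ) (hconv : Convex ℝ Δ)
    (g : (Fin n → ℝ) → ℝ) (C : ℝ) (hC : 0 ≤ C)
    (hg : ∀ u, |g u - lsf Δ u| ≤ C) :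
    (∀ x : Fin n → ℝ, lfT g x ≠ ⊥ ↔ x ∈ Δ) ∧
    (∀ x ∈ Δ, |(lfT g x).toReal| ≤ C) ∧
    ConcaveOn ℝ Δ (fun x => (lfT g x).toReal) := by
  -- lower bound on the defining function for x ∈ Δ
  have hlb : ∀ x ∈ Δ, ∀ u, -C ≤ dotp x u - g u := by
    intro x hx u
    have h1 := (abs_le.1 (hg u)).2
    have h2 := lsf_le hc hx u
    linarith
  have hbdd : ∀ x ∈ Δ, BddBelow (Set.range fun u => dotp x u - g u) := by
    intro x hx
    exact ⟨-C, by rintro r ⟨u, rfl⟩; exact hlb x hx u⟩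
  -- for x ∈ Δ, lfT equals the coercion of the real infimum
  have hkey : ∀ x ∈ Δ, lfT g x = (((⨅ u, dotp x u - g u : ℝ)) : EReal) := by
    intro x hx
    exact (Monotone.map_ciInf_of_continuousAt
      (continuous_coe_real_ereal.continuousAt)
      (fun a b h => EReal.coe_le_coe_iff.2 h) (hbdd x hx)).symm
  -- lsf Δ 0 = 0
  have hlsf0 : lsf Δ (0 : Fin n → ℝ) = 0 := by
    unfold lsf
    have : (fun v : Fin n → ℝ => dotp v 0) '' Δ = {0} := by
      apply Set.eq_singleton_iff_nonempty_unique_mem.2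
      constructor
      · obtain ⟨v, hv⟩ := hne
        exact ⟨0, ⟨v, hv, by simp [dotp]⟩⟩
      · rintro r ⟨v, hv, rfl⟩; simp [dotp]
    rw [this, csInf_singleton]
  -- bounds on the real infimum for x ∈ Δ
  have hFle : ∀ x ∈ Δ, (⨅ u, dotp x u - g u : ℝ) ≤ C := by
    intro x hx
    refine le_trans (ciInf_le (hbdd x hx) 0) ?_
    have h1 := (abs_le.1 (hg 0)).1
    have : dotp x 0 = 0 := by simp [dotp]
    rw [this, hlsf0] at *
    linarith [(abs_le.1 (hg 0)).1]
  have hFge : ∀ x ∈ Δ, -C ≤ (⨅ u, dotp x u - g u : ℝ) :=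
    fun x hx => le_ciInf (hlb x hx)
  -- x ∉ Δ → lfT = ⊥
  have hbot : ∀ x, x ∉ Δ → lfT g x = ⊥ := by
    intro x hx
    obtain ⟨f, r, hfx, hfb⟩ :=
      geometric_hahn_banach_point_closed hconv hc.isClosed hx
    set w : Fin n → ℝ := fun i => f (Pi.single i 1) with hw
    have hfd : ∀ v : Fin n → ℝ, f v = dotp v w := by
      intro v
      conv_lhs => rw [← Finset.univ_sum_single v]
      rw [map_sum]
      refine Finset.sum_congr rfl fun i _ => ?_
      have : (Pi.single i (v i) : Fin n → ℝ) = v i • (Pi.single i 1 : Fin n → ℝ) := by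
        ext j; by_cases h : i = j <;> simp [Pi.single_apply, h]
      rw [this, map_smul]; rfl
    have hd : dotp x w < r := by rw [← hfd]; exact hfx
    have hlsfw : ∀ t : ℝ, 0 ≤ t → t * r ≤ lsf Δ (t • w) := by
      intro t ht
      refine le_csInf (hne.image _) ?_
      rintro s ⟨v, hv, rfl⟩
      show t * r ≤ dotp v (t • w)
      rw [dotp_smul]
      exact mul_le_mul_of_nonneg_left (le_of_lt (by rw [← hfd]; exact hfb v hv)) ht
    rw [EReal.eq_bot_iff_forall_lt]
    intro M
    set d : ℝ := r - dotp x w with hdd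
    have hdpos : 0 < d := by simp [hdd]; linarith
    set t : ℝ := max 0 ((C - M) / d + 1) with htd
    have ht0 : (0:ℝ) ≤ t := le_max_left _ _
    have ht1 : (C - M) / d < t := lt_of_lt_of_le (lt_add_one _) (le_max_right _ _)
    have ht2 : C - M < t * d := by
      rw [div_lt_iff₀ hdpos] at ht1; linarith
    have hval : dotp x (t • w) - g (t • w) < M := by
      have h1 := (abs_le.1 (hg (t • w))).1
      have h2 := hlsfw t ht0
      rw [dotp_smul]
      have : t * dotp x w = t * r - t * d := by rw [hdd]; ring
      nlinarith
    calc lfT g x ≤ ((dotp x (t • w) - g (t • w) : ℝ) : EReal) := iInf_le _ _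
    _ < (M : EReal) := EReal.coe_lt_coe_iff.2 hval
  refine ⟨?_, ?_, ?_⟩
  · intro x
    constructor
    · intro h
      by_contra hx
      exact h (hbot x hx)
    · intro hx
      rw [hkey x hx]
      exact EReal.coe_ne_bot _
  · intro x hx
    rw [hkey x hx, EReal.toReal_coe]
    exact abs_le.2 ⟨hFge x hx, hFle x hx⟩
  · refine ⟨hconv, ?_⟩
    intro x hx y hy a b ha hb hab
    have hz : a • x + b • y ∈ Δ := hconv hx hy ha hb hab
    simp only [hkey x hx, hkey y hy, hkey _ hz, EReal.toReal_coe, smul_eq_mul]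
    refine le_ciInf fun u => ?_
    have h1 : (⨅ u, dotp x u - g u : ℝ) ≤ dotp x u - g u := ciInf_le (hbdd x hx) u
    have h2 : (⨅ u, dotp y u - g u : ℝ) ≤ dotp y u - g u := ciInf_le (hbdd y hy) u
    have h3 : dotp (a • x + b • y) u = a * dotp x u + b * dotp y u := dotp_comb a b x y u
    have h4 : a * (dotp x u - g u) + b * (dotp y u - g u) = dotp (a • x + b • y) u - g u := by
      rw [h3]; linear_combination (-(g u)) * hab
    have h5 := mul_le_mul_of_nonneg_left h1 ha
    have h6 := mul_le_mul_of_nonneg_left h2 hb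
    linarith
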